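/- For every n ≥ 6 with n ≡ 0 (mod 3), the decycling number of the square of the n-cycle equals n/3 + 1: ∇(Cₙ²) = n/3 + 1 = ⌈(n+1)/3⌉. -/

import Mathlib

open SimpleGraph

/-- `S` is a decycling set of `G` if the subgraph of `G` induced on the complement of `S`
is acyclic. -/
def SimpleGraph.IsDecyclingSet {V : Type*} (G : SimpleGraph V) (S : Set V) : Prop :=
  (G.induce Sᶜ).IsAcyclic

/-- The decycling number `∇(G)` of `G`: the minimum cardinality of a decycling set of `G`. -/
noncomputable def SimpleGraph.decyclingNumber {V : Type*} (G : SimpleGraph V) : ℕ :=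
  sInf {k | ∃ S : Set V, G.IsDecyclingSet S ∧ S.ncard = k}

/-- The square `Cₙ²` of the `n`-cycle: vertex set `ZMod n`, with `i` adjacent to `j` iff
`i ≠ j` and `i - j ≡ ±1` or `±2 (mod n)`. -/
def cycleSquare (n : ℕ) : SimpleGraph (ZMod n) where
  Adj i j := i ≠ j ∧ (i - j = 1 ∨ j - i = 1 ∨ i - j = 2 ∨ j - i = 2)
  symm := ⟨by intro i j ⟨h, hd⟩; exact ⟨h.symm, by tauto⟩⟩
  loopless := ⟨by intro i ⟨h, _⟩; exact h rfl⟩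

def pathN : SimpleGraph ℕ where
  Adj a b := b = a + 1 ∨ a = b + 1
  symm := ⟨by intro a b h; tauto⟩
  loopless := ⟨by intro a h; omega⟩

lemma pathN_first_edge {μ b : ℕ} (w : pathN.Walk μ b) (hw : ¬ w.Nil)
    (hmin : ∀ x ∈ w.support, μ ≤ x) : w.edges.head? = some s(μ, μ + 1) := by
  cases w with
  | nil => simp at hw
  | cons h p =>
    rename_i c
    have hc : μ ≤ c := hmin c (by simp [SimpleGraph.Walk.support_cons])
    have : c = μ + 1 := by cases h with
      | inl h => exact h
      | inr h => omega
    subst this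
    simp [SimpleGraph.Walk.edges_cons]

lemma pathN_isAcyclic : pathN.IsAcyclic := by
  intro v c hc
  classical
  have hne : c.support.toFinset.Nonempty := ⟨v, by simp⟩
  set μ := c.support.toFinset.min' hne with hμdef
  have hμmem : μ ∈ c.support := by
    have := c.support.toFinset.min'_mem hne; simpa using this
  have hmin : ∀ x ∈ c.support, μ ≤ x := fun x hx =>
    c.support.toFinset.min'_le x (by simpa using hx)
  set c' := c.rotate μ hμmem with hc'def
  have hc'cyc : c'.IsCycle := hc.rotate hμmem
  have hsupp : ∀ x ∈ c'.support, μ ≤ x := by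
    intro x hx
    rcases SimpleGraph.Walk.mem_support_iff _ |>.1 hx with rfl | hx'
    · exact le_rfl
    · have hrot := SimpleGraph.Walk.support_rotate c μ hμmem
      have : x ∈ c.support.tail := hrot.mem_iff.1 hx'
      exact hmin x (List.mem_of_mem_tail this)
  have hnotnil : ¬ c'.Nil := hc'cyc.not_nil
  have h1 : c'.edges.head? = some s(μ, μ + 1) := pathN_first_edge c' hnotnil hsupp
  have hrevnil : ¬ c'.reverse.Nil := by
    rw [SimpleGraph.Walk.nil_reverse]; exact hnotnil
  have h2 : c'.reverse.edges.head? = some s(μ, μ + 1) := by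
    apply pathN_first_edge c'.reverse hrevnil
    intro x hx
    rw [SimpleGraph.Walk.support_reverse, List.mem_reverse] at hx
    exact hsupp x hx
  rw [SimpleGraph.Walk.edges_reverse] at h2
  -- now contradiction from nodup
  have hnodup : c'.edges.Nodup := hc'cyc.isCircuit.isTrail.edges_nodup
  have hlen : 3 ≤ c'.edges.length := by
    rw [SimpleGraph.Walk.length_edges]
    exact hc'cyc.three_le_length
  obtain ⟨e, t, het⟩ : ∃ e t, c'.edges = e :: t := by
    cases h : c'.edges with
    | nil => rw [h] at hlen; simp at hlen
    | cons e t => exact ⟨e, t, rfl⟩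
  rw [het] at h1 h2 hnodup hlen
  simp at h1
  have ht : t ≠ [] := by intro h; subst h; simp at hlen
  have hgl : (e :: t).getLast? = some s(μ, μ+1) := by
    rw [← List.head?_reverse]; exact h2
  have hglmem : s(μ, μ+1) ∈ t := by
    rw [List.getLast?_eq_getLast (by simp), List.getLast_cons ht] at hgl
    have := List.getLast_mem ht
    rwa [Option.some_inj.1 hgl] at this
  rw [h1] at hnodup
  exact (List.nodup_cons.1 hnodup).1 hglmem

/-- the removed set, as a Finset -/
def F₀ (n m : ℕ) : Finset (ZMod n) :=
  insert 1 ((Finset.range m).image fun k => ((3*k : ℕ) : ZMod n))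

section Upper
variable {n : ℕ} [NeZero n]

lemma zmod_sub_val {x y : ZMod n} {c : ℕ} (hcn : c < n) (h : x - y = (c : ZMod n)) :
    x.val = y.val + c ∨ y.val + c = n + x.val := by
  have hx : x = y + (c : ZMod n) := by rw [← h]; ring
  have hcv : ((c : ℕ) : ZMod n).val = c := ZMod.val_cast_of_lt hcn
  have hadd : x.val = (y.val + c) % n := by rw [hx, ZMod.val_add, hcv]
  have hylt : y.val < n := ZMod.val_lt y
  rcases lt_or_ge (y.val + c) n with hl | hg
  · left; rw [hadd, Nat.mod_eq_of_lt hl]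
  · right
    have h2 : y.val + c - n < n := by omega
    rw [hadd, Nat.mod_eq_sub_mod hg, Nat.mod_eq_of_lt h2]; omega

lemma mem_F₀ (hn : 6 ≤ n) (hnm : n = 3 * (n / 3)) (x : ZMod n) :
    x ∈ F₀ n (n / 3) ↔ (x.val % 3 = 0 ∨ x.val = 1) := by
  haveI : Fact (1 < n) := ⟨by omega⟩
  constructor
  · intro hx
    rcases Finset.mem_insert.mp hx with rfl | hx
    · right; exact ZMod.val_one n
    · obtain ⟨k, hk, rfl⟩ := Finset.mem_image.mp hx
      rw [Finset.mem_range] at hk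
      left
      rw [ZMod.val_cast_of_lt (by omega)]
      omega
  · intro hx
    rcases hx with hx | hx
    · apply Finset.mem_insert.mpr; right
      apply Finset.mem_image.mpr
      refine ⟨x.val / 3, Finset.mem_range.mpr ?_, ?_⟩
      · have := ZMod.val_lt x; omega
      · apply ZMod.val_injective
        rw [ZMod.val_cast_of_lt (by have := ZMod.val_lt x; omega)]
        omega
    · apply Finset.mem_insert.mpr; left
      apply ZMod.val_injective
      rw [ZMod.val_one n]; omega

lemma card_F₀ (hn : 6 ≤ n) (hnm : n = 3 * (n / 3)) : (F₀ n (n / 3)).card = n / 3 + 1 := by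
  haveI : Fact (1 < n) := ⟨by omega⟩
  rw [F₀, Finset.card_insert_of_notMem, Finset.card_image_of_injOn, Finset.card_range]
  · intro a ha b hb hab
    rw [Finset.mem_coe, Finset.mem_range] at ha hb
    have h1 : ((3*a : ℕ) : ZMod n).val = 3*a := ZMod.val_cast_of_lt (by omega)
    have h2 : ((3*b : ℕ) : ZMod n).val = 3*b := ZMod.val_cast_of_lt (by omega)
    have := congrArg ZMod.val hab
    simp only at this
    rw [h1, h2] at this
    omega
  · intro hmem
    obtain ⟨k, hk, hke⟩ := Finset.mem_image.mp hmem
    rw [Finset.mem_range] at hk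
    have h1 : ((3*k : ℕ) : ZMod n).val = 3*k := ZMod.val_cast_of_lt (by omega)
    have := congrArg ZMod.val hke
    rw [h1, ZMod.val_one n] at this
    omega

/-- vertex-position map -/
def φ (x : ZMod n) : ℕ := if x.val % 3 = 1 then 2*(x.val/3) - 1 else 2*(x.val/3)

lemma upper_acyclic (hn : 6 ≤ n) (hnm : n = 3 * (n / 3)) :
    ((cycleSquare n).induce (↑(F₀ n (n / 3)) : Set (ZMod n))ᶜ).IsAcyclic := by
  -- build hom into pathN
  have hmem : ∀ x : ZMod n, x ∈ ((↑(F₀ n (n / 3)) : Set (ZMod n))ᶜ) →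
      x.val % 3 ≠ 0 ∧ x.val ≠ 1 := by
    intro x hx
    have := (mem_F₀ hn hnm x).not.mp (by simpa using hx)
    push_neg at this
    exact this
  have hadj : ∀ a b : ZMod n, a ∈ ((↑(F₀ n (n / 3)) : Set (ZMod n))ᶜ) →
      b ∈ ((↑(F₀ n (n / 3)) : Set (ZMod n))ᶜ) → (cycleSquare n).Adj a b →
      pathN.Adj (φ a) (φ b) := by
    intro a b ha hb hab
    obtain ⟨ha3, ha1⟩ := hmem a ha
    obtain ⟨hb3, hb1⟩ := hmem b hb
    have halt : a.val < n := ZMod.val_lt a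
    have hblt : b.val < n := ZMod.val_lt b
    obtain ⟨hne, hd⟩ := hab
    have hvne : a.val ≠ b.val := fun h => hne (ZMod.val_injective n h)
    have h1n : (1:ℕ) < n := by omega
    have h2n : (2:ℕ) < n := by omega
    show φ b = φ a + 1 ∨ φ a = φ b + 1
    unfold φ
    rcases hd with h | h | h | h
    · rcases zmod_sub_val h1n (by exact_mod_cast h) with h' | h' <;>
        split_ifs <;> omega
    · rcases zmod_sub_val h1n (by exact_mod_cast h) with h' | h' <;>
        split_ifs <;> omega
    · rcases zmod_sub_val h2n (by exact_mod_cast h) with h' | h' <;>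
        split_ifs <;> omega
    · rcases zmod_sub_val h2n (by exact_mod_cast h) with h' | h' <;>
        split_ifs <;> omega
  have hinj : Function.Injective
      (fun x : ((↑(F₀ n (n / 3)) : Set (ZMod n))ᶜ : Set (ZMod n)) => φ (x : ZMod n)) := by
    rintro ⟨a, ha⟩ ⟨b, hb⟩ hab
    obtain ⟨ha3, ha1⟩ := hmem a ha
    obtain ⟨hb3, hb1⟩ := hmem b hb
    simp only [φ] at hab
    have : a.val = b.val := by split_ifs at hab <;> omega
    exact Subtype.ext (ZMod.val_injective n this)
  let f : ((cycleSquare n).induce (↑(F₀ n (n / 3)) : Set (ZMod n))ᶜ) →g pathN :=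
    { toFun := fun x => φ (x : ZMod n)
      map_rel' := by
        rintro ⟨a, ha⟩ ⟨b, hb⟩ hab
        exact hadj a b ha hb hab }
  intro v c hc
  have := hc.map (f := f) hinj
  exact pathN_isAcyclic _ this

end Upper

section Forest
variable {V : Type*} [Fintype V] [Nonempty V] {G : SimpleGraph V}

lemma forest_card_edge_bound (hG : G.IsAcyclic) [Fintype G.edgeSet] :
    G.edgeFinset.card + 1 ≤ Fintype.card V := by
  classical
  set root : V → V := fun v => (G.connectedComponentMk v).out with hrootdef
  have hreach : ∀ v, G.Reachable v (root v) := by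
    intro v
    have : G.connectedComponentMk (root v) = G.connectedComponentMk v :=
      (G.connectedComponentMk v).out_eq
    exact (SimpleGraph.ConnectedComponent.eq.mp this).symm
  have hrooteq : ∀ {x y : V}, G.Adj x y → root x = root y := by
    intro x y h
    simp only [hrootdef]
    rw [SimpleGraph.ConnectedComponent.eq.mpr h.reachable]
  have hrootroot : ∀ v, root (root v) = root v := by
    intro v
    exact congrArg Quot.out (congrArg (G.connectedComponentMk ·) rfl ▸ (G.connectedComponentMk v).out_eq ▸ rfl)
  set p : ∀ v, G.Path v (root v) := fun v => (hreach v).some.toPath with hpdef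
  have hpath : ∀ v, ((p v) : G.Walk v (root v)).IsPath := fun v => (p v).2
  have huniq : ∀ v (q : G.Walk v (root v)), q.IsPath → q = (p v : G.Walk v (root v)) := by
    intro v q hq
    have := hG.path_unique ⟨q, hq⟩ (p v)
    exact congrArg Subtype.val this
  have key0 : ∀ x y : V, G.Adj x y →
      (p x : G.Walk x (root x)).length ≤ (p y : G.Walk y (root y)).length →
      ∃ w, ((p w : G.Walk w (root w)).edges).head? = some s(x, y) := by
    intro x y h hle
    have hy : y ∉ (p x : G.Walk x (root x)).support := by
      by_contra hy
      have h1 : ((p x : G.Walk x (root x)).takeUntil y hy).IsPath := (hpath x).takeUntil hy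
      have h2 : (SimpleGraph.Walk.cons h Walk.nil : G.Walk x y).IsPath := by
        simp [SimpleGraph.Walk.cons_isPath_iff, h.ne]
      have heq : (p x : G.Walk x (root x)).takeUntil y hy = SimpleGraph.Walk.cons h Walk.nil := by
        have := hG.path_unique ⟨_, h1⟩ ⟨_, h2⟩
        exact congrArg Subtype.val this
      have hdrop : (((p x : G.Walk x (root x)).dropUntil y hy).copy rfl (hrooteq h)).IsPath := by
        rw [SimpleGraph.Walk.isPath_copy]
        exact (hpath x).dropUntil hy
      have heq2 := huniq y _ hdrop
      have hlen : (p x : G.Walk x (root x)).length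
          = 1 + ((p x : G.Walk x (root x)).dropUntil y hy).length := by
        conv_lhs => rw [← SimpleGraph.Walk.take_spec _ hy]
        rw [SimpleGraph.Walk.length_append, heq]
        simp
      have hlen2 : (p y : G.Walk y (root y)).length
          = ((p x : G.Walk x (root x)).dropUntil y hy).length := by
        rw [← heq2, SimpleGraph.Walk.length_copy]
      omega
    have hq : ((SimpleGraph.Walk.cons h.symm (p x : G.Walk x (root x))).copy rfl (hrooteq h)).IsPath := by
      rw [SimpleGraph.Walk.isPath_copy, SimpleGraph.Walk.cons_isPath_iff]
      exact ⟨hpath x, hy⟩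
    have heq := huniq y _ hq
    refine ⟨y, ?_⟩
    rw [← heq]
    simp [SimpleGraph.Walk.edges_copy, SimpleGraph.Walk.edges_cons, Sym2.eq_swap]
  have key : ∀ {x y : V}, G.Adj x y →
      ∃ w, ((p w : G.Walk w (root w)).edges).head? = some s(x, y) := by
    intro x y h
    rcases le_total (p x : G.Walk x (root x)).length (p y : G.Walk y (root y)).length with hle | hle
    · exact key0 x y h hle
    · obtain ⟨w, hw⟩ := key0 y x h.symm hle
      exact ⟨w, by rwa [Sym2.eq_swap] at hw⟩
  -- build injection
  set v₀ : V := Classical.arbitrary V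
  have hFex : ∀ e : Sym2 V,
      ∃ w, e ∈ G.edgeFinset → ((p w : G.Walk w (root w)).edges).head? = some e := by
    intro e
    by_cases he : e ∈ G.edgeFinset
    · have he' : e ∈ G.edgeSet := Set.mem_toFinset.mp he
      induction e with
      | h x y =>
        obtain ⟨w, hw⟩ := key he'
        exact ⟨w, fun _ => hw⟩
    · exact ⟨v₀, fun h => absurd h he⟩
  choose F hF using hFex
  have hFne : ∀ e ∈ G.edgeFinset, F e ≠ root v₀ := by
    intro e he hcon
    have h1 := hF e he
    have hroot : root (F e) = F e := by rw [hcon, hrootroot]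
    have hnil : ((Walk.nil : G.Walk (F e) (F e)).copy rfl hroot.symm).IsPath := by
      rw [SimpleGraph.Walk.isPath_copy]; exact SimpleGraph.Walk.IsPath.nil
    have := huniq (F e) _ hnil
    rw [← this, SimpleGraph.Walk.edges_copy] at h1
    simp at h1
  have hinj : Set.InjOn F G.edgeFinset := by
    intro e₁ h₁ e₂ h₂ heq
    have g₁ := hF e₁ h₁
    have g₂ := hF e₂ h₂
    rw [heq] at g₁
    rw [g₁] at g₂
    exact Option.some_inj.mp g₂
  have hsub : ∀ e ∈ G.edgeFinset, F e ∈ Finset.univ.erase (root v₀) := by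
    intro e he
    exact Finset.mem_erase.mpr ⟨hFne e he, Finset.mem_univ _⟩
  have := Finset.card_le_card_of_injOn F hsub hinj
  rw [Finset.card_erase_of_mem (Finset.mem_univ _), Finset.card_univ] at this
  have hpos : 0 < Fintype.card V := Fintype.card_pos
  omega

end Forest

section Lower
variable {n : ℕ}

lemma lower_bound (hn : 6 ≤ n) (hnm : n = 3 * (n / 3)) (S : Set (ZMod n))
    (hS : ((cycleSquare n).induce Sᶜ).IsAcyclic) : n / 3 + 1 ≤ S.ncard := by
  haveI : NeZero n := ⟨by omega⟩
  classical
  by_contra hcon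
  push_neg at hcon
  have hs : S.ncard ≤ n / 3 := by omega
  have hcompl : S.ncard + Sᶜ.ncard = n := by
    rw [Set.ncard_add_ncard_compl, Nat.card_eq_fintype_card, ZMod.card]
  have hSc_ne : Sᶜ.Nonempty := (Set.ncard_pos (Set.toFinite _)).mp (by omega)
  obtain ⟨v₀, hv₀⟩ := hSc_ne
  haveI : Nonempty ↥Sᶜ := ⟨⟨v₀, hv₀⟩⟩
  letI : Fintype ↥Sᶜ := (Sᶜ).toFinite.fintype
  letI : Fintype ((cycleSquare n).induce Sᶜ).edgeSet := (Set.toFinite _).fintype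
  set G' := (cycleSquare n).induce Sᶜ with hG'def
  -- the lift
  set lift : ZMod n → ↥Sᶜ := fun x => if hx : x ∈ Sᶜ then ⟨x, hx⟩ else ⟨v₀, hv₀⟩ with hliftdef
  have hlift : ∀ x : ZMod n, x ∉ S → (lift x : ZMod n) = x := by
    intro x hx
    simp only [hliftdef]
    rw [dif_pos ((Set.mem_compl_iff S x).mpr hx)]
  -- helper facts
  have hcast_ne : ∀ c : ℕ, 0 < c → c < 6 → ((c : ℕ) : ZMod n) ≠ 0 := by
    intro c hc hc6 hcc
    rw [ZMod.natCast_eq_zero_iff] at hcc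
    have := Nat.le_of_dvd hc hcc
    omega
  set T := S.toFinite.toFinset with hTdef
  have hTcard : T.card = S.ncard := (Set.ncard_eq_toFinset_card S S.toFinite).symm
  have hTmem : ∀ x : ZMod n, x ∈ T ↔ x ∈ S := fun x => Set.Finite.mem_toFinset _
  set A := Finset.univ.filter (fun i : ZMod n => i ∉ S ∧ i + 1 ∉ S) with hAdef
  set B := Finset.univ.filter (fun i : ZMod n => i ∉ S ∧ i + 2 ∉ S) with hBdef
  have hcardbound : ∀ d : ZMod n,
      n ≤ (Finset.univ.filter (fun i : ZMod n => i ∉ S ∧ i + d ∉ S)).card + 2 * S.ncard := by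
    intro d
    have hsub : Finset.univ.filter (fun i : ZMod n => ¬(i ∉ S ∧ i + d ∉ S)) ⊆
        T ∪ T.image (fun x => x - d) := by
      intro i hi
      rw [Finset.mem_filter] at hi
      rcases not_and_or.mp hi.2 with h | h
      · push_neg at h
        exact Finset.mem_union_left _ ((hTmem i).mpr h)
      · push_neg at h
        apply Finset.mem_union_right
        exact Finset.mem_image.mpr ⟨i + d, (hTmem _).mpr h, by ring⟩
    have h1 := Finset.card_filter_add_card_filter_not
      (s := (Finset.univ : Finset (ZMod n))) (p := fun i : ZMod n => i ∉ S ∧ i + d ∉ S)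
    have h2 : (Finset.univ.filter (fun i : ZMod n => ¬(i ∉ S ∧ i + d ∉ S))).card
        ≤ 2 * S.ncard := by
      calc _ ≤ (T ∪ T.image (fun x => x - d)).card := Finset.card_le_card hsub
        _ ≤ T.card + (T.image (fun x => x - d)).card := Finset.card_union_le _ _
        _ ≤ T.card + T.card := by
            have := Finset.card_image_le (s := T) (f := fun x => x - d); omega
        _ = 2 * S.ncard := by omega
    have h3 : (Finset.univ : Finset (ZMod n)).card = n := by
      rw [Finset.card_univ, ZMod.card]
    omega
  have hA : n ≤ A.card + 2 * S.ncard := hcardbound 1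
  have hB : n ≤ B.card + 2 * S.ncard := hcardbound 2
  have hone : (1 : ZMod n) ≠ 0 := by
    have := hcast_ne 1 one_pos (by omega); push_cast at this; exact this
  have htwo : (2 : ZMod n) ≠ 0 := by
    have := hcast_ne 2 two_pos (by omega); push_cast at this; exact this
  set fA : ZMod n → Sym2 ↥Sᶜ := fun i => s(lift i, lift (i + 1)) with hfAdef
  set fB : ZMod n → Sym2 ↥Sᶜ := fun i => s(lift i, lift (i + 2)) with hfBdef
  have hmemA : ∀ i ∈ A, i ∉ S ∧ i + 1 ∉ S := fun i hi => (Finset.mem_filter.mp hi).2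
  have hmemB : ∀ i ∈ B, i ∉ S ∧ i + 2 ∉ S := fun i hi => (Finset.mem_filter.mp hi).2
  have hedge : ∀ (i d : ZMod n), (d = 1 ∨ d = 2) → i ∉ S → i + d ∉ S →
      s(lift i, lift (i + d)) ∈ G'.edgeFinset := by
    intro i d hd hiS hidS
    rw [SimpleGraph.mem_edgeFinset, SimpleGraph.mem_edgeSet]
    have e1 : (lift i : ZMod n) = i := hlift i hiS
    have e2 : (lift (i + d) : ZMod n) = i + d := hlift _ hidS
    have hdne : d ≠ 0 := by rcases hd with rfl | rfl; exacts [hone, htwo]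
    show (cycleSquare n).Adj (lift i : ZMod n) (lift (i + d) : ZMod n)
    rw [e1, e2]
    refine ⟨fun hcc => hdne (by linear_combination -hcc), ?_⟩
    rcases hd with rfl | rfl
    · exact Or.inr (Or.inl (by ring))
    · exact Or.inr (Or.inr (Or.inr (by ring)))
  have hliftinj : ∀ x y : ZMod n, x ∉ S → y ∉ S → lift x = lift y → x = y := by
    intro x y hx hy hxy
    rw [← hlift x hx, ← hlift y hy, hxy]
  have hinjA : Set.InjOn fA A := by
    intro i hi j hj hij
    obtain ⟨hi1, hi2⟩ := hmemA i hi
    obtain ⟨hj1, hj2⟩ := hmemA j hj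
    rcases Sym2.eq_iff.mp hij with ⟨h1, h2⟩ | ⟨h1, h2⟩
    · exact hliftinj _ _ hi1 hj1 h1
    · have g1 := hliftinj _ _ hi1 hj2 h1
      have g2 := hliftinj _ _ hi2 hj1 h2
      exfalso
      apply hcast_ne 2 two_pos (by omega)
      push_cast
      linear_combination g2 - g1
  have hinjB : Set.InjOn fB B := by
    intro i hi j hj hij
    obtain ⟨hi1, hi2⟩ := hmemB i hi
    obtain ⟨hj1, hj2⟩ := hmemB j hj
    rcases Sym2.eq_iff.mp hij with ⟨h1, h2⟩ | ⟨h1, h2⟩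
    · exact hliftinj _ _ hi1 hj1 h1
    · have g1 := hliftinj _ _ hi1 hj2 h1
      have g2 := hliftinj _ _ hi2 hj1 h2
      exfalso
      apply hcast_ne 4 (by omega) (by omega)
      push_cast
      linear_combination g2 - g1
  have hdisj : Disjoint (A.image fA) (B.image fB) := by
    rw [Finset.disjoint_left]
    intro e heA heB
    obtain ⟨i, hi, rfl⟩ := Finset.mem_image.mp heA
    obtain ⟨j, hj, hji⟩ := Finset.mem_image.mp heB
    obtain ⟨hi1, hi2⟩ := hmemA i hi
    obtain ⟨hj1, hj2⟩ := hmemB j hj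
    rcases Sym2.eq_iff.mp hji.symm with ⟨h1, h2⟩ | ⟨h1, h2⟩
    · have g1 := hliftinj _ _ hi1 hj1 h1
      have g2 := hliftinj _ _ hi2 hj2 h2
      apply hcast_ne 1 one_pos (by omega)
      push_cast
      linear_combination g1 - g2
    · have g1 := hliftinj _ _ hi1 hj2 h1
      have g2 := hliftinj _ _ hi2 hj1 h2
      apply hcast_ne 3 (by omega) (by omega)
      push_cast
      linear_combination g2 - g1
  have hWsub : A.image fA ∪ B.image fB ⊆ G'.edgeFinset := by
    intro e he
    rcases Finset.mem_union.mp he with he | he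
    · obtain ⟨i, hi, rfl⟩ := Finset.mem_image.mp he
      exact hedge i 1 (Or.inl rfl) (hmemA i hi).1 (hmemA i hi).2
    · obtain ⟨i, hi, rfl⟩ := Finset.mem_image.mp he
      exact hedge i 2 (Or.inr rfl) (hmemB i hi).1 (hmemB i hi).2
  have hWcard : (A.image fA ∪ B.image fB).card = A.card + B.card := by
    rw [Finset.card_union_of_disjoint hdisj, Finset.card_image_of_injOn hinjA,
      Finset.card_image_of_injOn hinjB]
  have hcount : A.card + B.card ≤ G'.edgeFinset.card := by
    rw [← hWcard]; exact Finset.card_le_card hWsub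
  have hforest := forest_card_edge_bound hS
  have hcardSc : Fintype.card ↥Sᶜ = Sᶜ.ncard := by
    rw [Set.ncard_eq_toFinset_card' (Sᶜ), Set.toFinset_card]
  rw [hcardSc] at hforest
  omega

end Lower

/-- For every `n ≥ 6` with `n ≡ 0 (mod 3)`, `∇(Cₙ²) = n/3 + 1 = ⌈(n+1)/3⌉`. -/
theorem decyclingNumber_cycleSquare_zero_mod_three (n : ℕ) (hn : 6 ≤ n) (h3 : n % 3 = 0) :
    (cycleSquare n).decyclingNumber = n / 3 + 1 ∧ n / 3 + 1 = ⌈((n : ℚ) + 1) / 3⌉₊ := by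
  haveI : NeZero n := ⟨by omega⟩
  have hnm : n = 3 * (n / 3) := by omega
  have hceil : n / 3 + 1 = ⌈((n : ℚ) + 1) / 3⌉₊ := by
    symm
    rw [Nat.ceil_eq_iff (by omega)]
    constructor
    · show ((n / 3 + 1 - 1 : ℕ) : ℚ) < ((n : ℚ) + 1) / 3
      rw [lt_div_iff₀ (by norm_num : (0:ℚ) < 3)]
      have : ((n / 3 : ℕ) : ℚ) * 3 < (n : ℚ) + 1 := by
        exact_mod_cast (by omega : n / 3 * 3 < n + 1)
      simpa using this
    · rw [div_le_iff₀ (by norm_num : (0:ℚ) < 3)]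
      have : ((n : ℕ) : ℚ) + 1 ≤ ((n / 3 + 1 : ℕ) : ℚ) * 3 := by
        exact_mod_cast (by omega : n + 1 ≤ (n / 3 + 1) * 3)
      simpa using this
  refine ⟨le_antisymm ?_ ?_, hceil⟩
  · apply Nat.sInf_le
    refine ⟨(↑(F₀ n (n / 3)) : Set (ZMod n)), upper_acyclic hn hnm, ?_⟩
    rw [Set.ncard_coe_finset, card_F₀ hn hnm]
  · apply le_csInf
    · exact ⟨_, (↑(F₀ n (n / 3)) : Set (ZMod n)), upper_acyclic hn hnm, rfl⟩
    · rintro k ⟨S, hS, rfl⟩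
      exact lower_bound hn hnm S hS
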